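/- Let ℝ^n be endowed with the max-norm ‖·‖∞. Call a pair (l,b) ∈ ℝ^n × ℝ^n admissible if ‖l‖∞ = 1, l_i > 0 for every i = 1,…,n, and ∑_{i=1}^n b_i = 0. Then for every pair (u,v) ∈ ℝ^n × ℝ^n with u_i < v_i for all i, there exist a unique admissible pair (l,b) and unique real numbers s < t such that u = s·l + b and v = t·l + b. Conversely, for every admissible pair (l,b) and all real numbers s < t, the points u = s·l + b and v = t·l + b satisfy u_i < v_i for all i. Hence the half-planes π_{(l,b)} = {(s·l + b, t·l + b) : s,t ∈ ℝ, s < t}, as (l,b) ranges over admissible pairs, form a partition (foliation) of the open set Δ⁺ = {(u,v) ∈ ℝ^n × ℝ^n : u_i < v_i for all i}. -/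

import Mathlib

/-- **Foliation of Δ⁺ by half-planes of admissible pairs.**
A pair `(l, b)` in `ℝⁿ × ℝⁿ` is *admissible* if `‖l‖∞ = 1`, every component of `l`
is strictly positive, and the components of `b` sum to zero.  (The norm on
`Fin n → ℝ` is the sup-norm.)  For every `(u, v) ∈ Δ⁺` (i.e. `u i < v i` for all `i`)
there exist a unique admissible pair `(l, b)` and unique reals `s < t` with
`u = s • l + b` and `v = t • l + b`; conversely every such point lies in `Δ⁺`. -/
theorem foliation_of_delta_plus (n : ℕ) (hn : 0 < n) :
    (∀ u v : Fin n → ℝ, (∀ i, u i < v i) →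
      ∃! q : (Fin n → ℝ) × (Fin n → ℝ) × ℝ × ℝ,
        ‖q.1‖ = 1 ∧ (∀ i, 0 < q.1 i) ∧ (∑ i, q.2.1 i) = 0 ∧
          q.2.2.1 < q.2.2.2 ∧ u = q.2.2.1 • q.1 + q.2.1 ∧ v = q.2.2.2 • q.1 + q.2.1) ∧
    (∀ l b : Fin n → ℝ, ‖l‖ = 1 → (∀ i, 0 < l i) → (∑ i, b i) = 0 →
      ∀ s t : ℝ, s < t → ∀ i, (s • l + b) i < (t • l + b) i) := by
  have inst : Nonempty (Fin n) := ⟨⟨0, hn⟩⟩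
  constructor
  · intro u v huv
    have hd : ∀ i, 0 < (v - u) i := fun i => by simpa using sub_pos.mpr (huv i)
    set c := ‖v - u‖ with hc
    have hcpos : 0 < c := by
      rw [hc, norm_pos_iff]
      intro h
      have := hd ⟨0, hn⟩
      rw [h] at this; simp at this
    set l₀ : Fin n → ℝ := c⁻¹ • (v - u) with hl₀def
    have hl₀norm : ‖l₀‖ = 1 := by
      rw [hl₀def, norm_smul, norm_inv, Real.norm_eq_abs, abs_of_pos hcpos, ← hc,
        inv_mul_cancel₀ hcpos.ne']
    have hl₀pos : ∀ i, 0 < l₀ i := fun i => by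
      simp only [hl₀def, Pi.smul_apply, smul_eq_mul]
      exact mul_pos (inv_pos.mpr hcpos) (hd i)
    have hcl₀ : c • l₀ = v - u := by
      rw [hl₀def, smul_smul, mul_inv_cancel₀ hcpos.ne', one_smul]
    set S : ℝ := ∑ i, l₀ i with hS
    have hSpos : 0 < S := Finset.sum_pos (fun i _ => hl₀pos i) Finset.univ_nonempty
    set s₀ : ℝ := (∑ i, u i) / S with hs₀
    set b₀ : Fin n → ℝ := u - s₀ • l₀ with hb₀
    set t₀ : ℝ := s₀ + c with ht₀
    have sum_eq : ∀ (s : ℝ) (l b : Fin n → ℝ), u = s • l + b → (∑ i, b i) = 0 →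
        (∑ i, u i) = s * ∑ i, l i := by
      intro s l b h hb
      rw [h]
      simp [Finset.sum_add_distrib, Finset.mul_sum, hb]
    refine ⟨(l₀, b₀, s₀, t₀), ⟨hl₀norm, hl₀pos, ?_, by
        simpa [ht₀] using hcpos, by simp [hb₀], ?_⟩, ?_⟩
    · rw [hb₀]
      simp only [Pi.sub_apply, Pi.smul_apply, smul_eq_mul, Finset.sum_sub_distrib,
        ← Finset.mul_sum, ← hS, hs₀, div_mul_cancel₀ _ hSpos.ne', sub_self]
    · have : t₀ • l₀ + b₀ = u + c • l₀ := by
        rw [ht₀, hb₀, add_smul]; abel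
      rw [this, hcl₀]; abel
    · rintro ⟨l, b, s, t⟩ ⟨h1, h2, h3, h4, h5, h6⟩
      have hvu : v - u = (t - s) • l := by
        rw [h5, h6, sub_smul]; abel
      have hts : t - s = c := by
        have : c = |t - s| * ‖l‖ := by rw [hc, hvu, norm_smul, Real.norm_eq_abs]
        rw [this, h1, mul_one, abs_of_pos (sub_pos.mpr h4)]
      have hl : l = l₀ := by
        rw [hl₀def, hvu, hts, smul_smul, inv_mul_cancel₀ hcpos.ne', one_smul]
      have hSl : S = ∑ i, l i := by rw [hS, hl]
      have hs : s = s₀ := by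
        have := sum_eq s l b h5 h3
        rw [hs₀, this, ← hSl, mul_div_cancel_right₀ _ hSpos.ne']
      have hb : b = b₀ := by
        rw [hb₀, ← hs, ← hl, h5]; abel
      have ht : t = t₀ := by
        rw [ht₀, ← hs, ← hts]; ring
      simp [Prod.ext_iff, hl, hb, hs, ht]
  · intro l b hl hlpos hb s t hst i
    simp only [Pi.add_apply, Pi.smul_apply, smul_eq_mul]
    exact add_lt_add_of_lt_of_le (mul_lt_mul_of_pos_right hst (hlpos i)) le_rfl
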